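/- Let n be a positive integer, Q an n × n real symmetric matrix, and p ∈ ℝⁿ. Define f : (Fin n → ℝ) → ℝ by f(x) = xᵀQx + pᵀx = Σ_{i,j} Q i j · x i · x j + Σᵢ p i · x i. Then f is submodular with respect to the componentwise order on Fin n → ℝ (i.e., f(x ⊔ x') + f(x ⊓ x') ≤ f(x) + f(x') for all x, x') if and only if Q i j ≤ 0 for all i ≠ j. -/

import Mathlib

/-- The quadratic objective `f(x) = xᵀQx + pᵀx`. -/
def quadObj {n : ℕ} (Q : Matrix (Fin n) (Fin n) ℝ) (p : Fin n → ℝ)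
    (x : Fin n → ℝ) : ℝ :=
  (∑ i, ∑ j, Q i j * x i * x j) + ∑ i, p i * x i

lemma key_ineq (a b c d : ℝ) : a*c + b*d ≤ max a b * max c d + min a b * min c d := by
  rcases le_total a b with h1 | h1 <;> rcases le_total c d with h2 | h2 <;>
    simp [max_eq_left, max_eq_right, min_eq_left, min_eq_right, h1, h2] <;> nlinarith

/-- A quadratic form `xᵀQx + pᵀx` with `Q` symmetric is submodular with respect
to the componentwise order on `Fin n → ℝ` iff all off-diagonal entries of `Q`
are nonpositive. -/
theorem quadObj_submodular_iff
    (n : ℕ) (hn : 0 < n) (Q : Matrix (Fin n) (Fin n) ℝ) (hQ : Q.IsSymm)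
    (p : Fin n → ℝ) :
    (∀ x x' : Fin n → ℝ,
      quadObj Q p (x ⊔ x') + quadObj Q p (x ⊓ x') ≤ quadObj Q p x + quadObj Q p x') ↔
    (∀ i j : Fin n, i ≠ j → Q i j ≤ 0) := by
  constructor
  · intro hsub i j hij
    set x : Fin n → ℝ := fun k => if k = i then 1 else 0 with hx
    set x' : Fin n → ℝ := fun k => if k = j then 1 else 0 with hx'
    have hji : j ≠ i := Ne.symm hij
    have hsup : x ⊔ x' = x + x' := by
      funext k
      simp only [Pi.sup_apply, Pi.add_apply, hx, hx']
      by_cases h1 : k = i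
      · subst h1; simp [hji.symm]
      · by_cases h2 : k = j
        · subst h2; simp [hji]
        · simp [h1, h2]
    have hinf : x ⊓ x' = 0 := by
      funext k
      simp only [Pi.inf_apply, Pi.zero_apply, hx, hx']
      by_cases h1 : k = i
      · subst h1; simp [hji.symm]
      · simp only [h1, if_false]
        by_cases h2 : k = j <;> simp [h2]
    have h := hsub x x'
    rw [hsup, hinf] at h
    have hs : Q j i = Q i j := by
      have := congrFun (congrFun hQ i) j
      simpa [Matrix.transpose_apply] using this
    simp only [quadObj, hx, hx', Pi.add_apply, Pi.zero_apply] at h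
    simp only [mul_ite, ite_mul, mul_one, mul_zero, one_mul, zero_mul, mul_add, add_mul,
      Finset.sum_add_distrib, Finset.sum_ite_eq', Finset.mem_univ, if_true,
      Finset.sum_const_zero, add_zero, zero_add] at h
    nlinarith [h, hs]
  · intro hQ0 x x'
    simp only [quadObj, Pi.sup_apply, Pi.inf_apply]
    have hlin : ∑ i, p i * (x i ⊔ x' i) + ∑ i, p i * (x i ⊓ x' i)
        = ∑ i, p i * x i + ∑ i, p i * x' i := by
      rw [← Finset.sum_add_distrib, ← Finset.sum_add_distrib]
      refine Finset.sum_congr rfl fun i _ => ?_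
      rw [← mul_add, ← mul_add, max_add_min]
    have hquad : ∑ i, ∑ j, Q i j * (x i ⊔ x' i) * (x j ⊔ x' j)
        + ∑ i, ∑ j, Q i j * (x i ⊓ x' i) * (x j ⊓ x' j)
        ≤ ∑ i, ∑ j, Q i j * x i * x j + ∑ i, ∑ j, Q i j * x' i * x' j := by
      rw [← Finset.sum_add_distrib, ← Finset.sum_add_distrib]
      refine Finset.sum_le_sum fun i _ => ?_
      rw [← Finset.sum_add_distrib, ← Finset.sum_add_distrib]
      refine Finset.sum_le_sum fun j _ => ?_
      by_cases hij : i = j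
      · subst hij
        rcases le_total (x i) (x' i) with h | h <;>
          simp [max_eq_left, max_eq_right, min_eq_left,
            min_eq_right, h] <;>
          ring_nf <;> nlinarith
      · have hq := hQ0 i j hij
        have hk := key_ineq (x i) (x' i) (x j) (x' j)
        have := mul_le_mul_of_nonpos_left hk hq
        have hmax : ∀ a b : ℝ, a ⊔ b = max a b := fun _ _ => rfl
        have hmin : ∀ a b : ℝ, a ⊓ b = min a b := fun _ _ => rfl
        rw [hmax, hmax, hmin, hmin]
        nlinarith [this]
    linarith
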